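/- Assume each p_i takes values almost surely in the finite set A. Let α ∈ (0,1) and define the [DBH-SU] critical values by τ_m = max{t ∈ A : F_i(t) < 1 for all i, and (1/m)·Σ_{i=1}^m F_i(t)/(1−F_i(t)) ≤ α} and, for 1 ≤ k ≤ m−1, τ_k = max{t ∈ A : t ≤ τ_m and (1/m)·Σ_{i=1}^m F_i(t)/(1−F_i(τ_m)) ≤ αk/m} (these sets contain 0, hence are nonempty, and the resulting sequence (τ_1,…,τ_m) is nondecreasing). Then the false discovery rate of the step-up procedure SU(τ) satisfies FDR(SU(τ)) ≤ α. -/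

import Mathlib

open MeasureTheory ProbabilityTheory Finset

/-- Number of rejections of the step-up procedure with critical values `τ 1, …, τ m`
(convention `τ 0 = 0`): the largest `k ∈ {0, …, m}` such that at least `k` of the
p-values are `≤ τ k`. -/
noncomputable def numRejSU (m : ℕ) (τ : ℕ → ℝ) (q : Fin m → ℝ) : ℕ :=
  sSup {k | k ≤ m ∧ k ≤ (univ.filter (fun j => q j ≤ τ k)).card}

/-- Rejection set of the step-up procedure. -/
noncomputable def rejSU (m : ℕ) (τ : ℕ → ℝ) (q : Fin m → ℝ) : Finset (Fin m) :=
  univ.filter (fun i => q i ≤ τ (numRejSU m τ q))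

/-- False discovery proportion of a rejection set `R` w.r.t. the set of true nulls `H0`. -/
noncomputable def FDP (m : ℕ) (H0 R : Finset (Fin m)) : ℝ :=
  ((R ∩ H0).card : ℝ) / max (R.card : ℝ) 1

namespace DBHaux

variable (m : ℕ) (τ : ℕ → ℝ)

/-- number of p-values `≤ τ k` -/
noncomputable def Ncnt (q : Fin m → ℝ) (k : ℕ) : ℕ :=
  (univ.filter (fun j => q j ≤ τ k)).card

/-- the "ghost" step-up index with one free rejection -/
noncomputable def Kmax (q : Fin m → ℝ) : ℕ :=
  sSup {k | k ≤ m ∧ k ≤ Ncnt m τ q k + 1}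

variable {m τ}

lemma numRej_mem (q : Fin m → ℝ) :
    numRejSU m τ q ≤ m ∧ numRejSU m τ q ≤ Ncnt m τ q (numRejSU m τ q) := by
  have h : numRejSU m τ q ∈ {k | k ≤ m ∧ k ≤ Ncnt m τ q k} := by
    apply Nat.sSup_mem ⟨0, by simp only [Set.mem_setOf_eq]; exact ⟨Nat.zero_le _, Nat.zero_le _⟩⟩
      ⟨m, fun k hk => hk.1⟩
  exact h

lemma le_numRej {q : Fin m → ℝ} {k : ℕ} (hk : k ≤ m) (h : k ≤ Ncnt m τ q k) :
    k ≤ numRejSU m τ q :=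
  le_csSup ⟨m, fun l hl => hl.1⟩ ⟨hk, h⟩

lemma Ncnt_mono (hτ : ∀ k l, k ≤ l → l ≤ m → τ k ≤ τ l) (q : Fin m → ℝ)
    {k l : ℕ} (hkl : k ≤ l) (hl : l ≤ m) : Ncnt m τ q k ≤ Ncnt m τ q l := by
  apply card_le_card
  intro j hj
  simp only [mem_filter, mem_univ, true_and] at hj ⊢
  exact hj.trans (hτ k l hkl hl)

lemma Ncnt_numRej (hτ : ∀ k l, k ≤ l → l ≤ m → τ k ≤ τ l) (q : Fin m → ℝ) :
    Ncnt m τ q (numRejSU m τ q) = numRejSU m τ q := by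
  obtain ⟨h1, h2⟩ := numRej_mem (τ := τ) q
  refine le_antisymm ?_ h2
  rcases eq_or_lt_of_le h1 with h | h
  · have : Ncnt m τ q (numRejSU m τ q) ≤ m := by
      rw [Ncnt]; simpa using card_filter_le (univ : Finset (Fin m)) _
    omega
  · have hnot : ¬ (numRejSU m τ q + 1 ≤ Ncnt m τ q (numRejSU m τ q + 1)) := by
      intro hc
      have := le_numRej (q := q) (k := numRejSU m τ q + 1) h hc
      omega
    have := Ncnt_mono hτ q (k := numRejSU m τ q) (l := numRejSU m τ q + 1)
      (by omega) h
    omega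

lemma Kmax_mem (hm : 1 ≤ m) (q : Fin m → ℝ) :
    1 ≤ Kmax m τ q ∧ Kmax m τ q ≤ m := by
  have h : Kmax m τ q ∈ {k | k ≤ m ∧ k ≤ Ncnt m τ q k + 1} := by
    apply Nat.sSup_mem ⟨0, by simp only [Set.mem_setOf_eq]; exact ⟨Nat.zero_le _, Nat.zero_le _⟩⟩
      ⟨m, fun k hk => hk.1⟩
  exact ⟨le_csSup ⟨m, fun l hl => hl.1⟩ ⟨hm, by omega⟩, h.1⟩

lemma τ_nonneg (hτ : ∀ k l, k ≤ l → l ≤ m → τ k ≤ τ l) (hτ0 : τ 0 = 0)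
    {k : ℕ} (hk : k ≤ m) : 0 ≤ τ k := hτ0 ▸ hτ 0 k (Nat.zero_le k) hk

lemma Ncnt_update_ge (hτ : ∀ k l, k ≤ l → l ≤ m → τ k ≤ τ l) (hτ0 : τ 0 = 0)
    (q : Fin m → ℝ) (i : Fin m) {k : ℕ} (hk : k ≤ m) :
    Ncnt m τ q k ≤ Ncnt m τ (Function.update q i 0) k := by
  apply card_le_card
  intro j hj
  simp only [mem_filter, mem_univ, true_and] at hj ⊢
  rcases eq_or_ne j i with rfl | h
  · simpa using τ_nonneg hτ hτ0 hk
  · rwa [Function.update_of_ne h]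

lemma numRej_update_ge (hτ : ∀ k l, k ≤ l → l ≤ m → τ k ≤ τ l) (hτ0 : τ 0 = 0)
    (q : Fin m → ℝ) (i : Fin m) :
    numRejSU m τ q ≤ numRejSU m τ (Function.update q i 0) := by
  obtain ⟨h1, h2⟩ := numRej_mem (τ := τ) q
  exact le_numRej h1 (h2.trans (Ncnt_update_ge hτ hτ0 q i h1))

lemma one_le_numRej_update (hτ : ∀ k l, k ≤ l → l ≤ m → τ k ≤ τ l) (hτ0 : τ 0 = 0)
    (hm : 1 ≤ m) (q : Fin m → ℝ) (i : Fin m) :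
    1 ≤ numRejSU m τ (Function.update q i 0) := by
  apply le_numRej hm
  rw [Ncnt]
  refine card_pos.mpr ⟨i, ?_⟩
  simp only [mem_filter, mem_univ, true_and, Function.update_self]
  exact τ_nonneg hτ hτ0 hm

lemma numRej_update_eq (hτ : ∀ k l, k ≤ l → l ≤ m → τ k ≤ τ l) (hτ0 : τ 0 = 0)
    (q : Fin m → ℝ) (i : Fin m)
    (hle : q i ≤ τ (numRejSU m τ (Function.update q i 0))) :
    numRejSU m τ q = numRejSU m τ (Function.update q i 0) := by
  obtain ⟨h1, h2⟩ := numRej_mem (τ := τ) (Function.update q i 0)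
  refine le_antisymm (numRej_update_ge hτ hτ0 q i) ?_
  apply le_numRej h1
  have heq : Ncnt m τ (Function.update q i 0) (numRejSU m τ (Function.update q i 0))
      = Ncnt m τ q (numRejSU m τ (Function.update q i 0)) := by
    unfold Ncnt
    congr 1
    apply filter_congr
    intro j _
    rcases eq_or_ne j i with rfl | h
    · simp only [Function.update_self]
      exact iff_of_true (τ_nonneg hτ hτ0 h1) hle
    · rw [Function.update_of_ne h]
  rw [← heq]
  exact h2

/-- the key pointwise identity for the leave-one-out step-up index -/
lemma su_identity (hτ : ∀ k l, k ≤ l → l ≤ m → τ k ≤ τ l) (hτ0 : τ 0 = 0)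
    (hm : 1 ≤ m) (q : Fin m → ℝ) (i : Fin m) :
    (if q i ≤ τ (numRejSU m τ q) then ((max (numRejSU m τ q) 1 : ℕ) : ℝ)⁻¹ else 0)
      = (if q i ≤ τ (numRejSU m τ (Function.update q i 0))
          then ((numRejSU m τ (Function.update q i 0) : ℕ) : ℝ)⁻¹ else 0) := by
  by_cases h : q i ≤ τ (numRejSU m τ (Function.update q i 0))
  · have heq := numRej_update_eq hτ hτ0 q i h
    have h1 := one_le_numRej_update hτ hτ0 hm q i
    rw [heq, if_pos h, if_pos h]
    have : max (numRejSU m τ (Function.update q i 0)) 1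
        = numRejSU m τ (Function.update q i 0) := by omega
    rw [this]
  · rw [if_neg h, if_neg ?_]
    intro hc
    apply h
    obtain ⟨h1, _⟩ := numRej_mem (τ := τ) (Function.update q i 0)
    exact hc.trans (hτ _ _ (numRej_update_ge hτ hτ0 q i) h1)

/-- when `q i > τ m`, the leave-one-out index is the ghost index `Kmax` -/
lemma numRej_update_of_gt (hτ : ∀ k l, k ≤ l → l ≤ m → τ k ≤ τ l) (hτ0 : τ 0 = 0)
    (q : Fin m → ℝ) (i : Fin m) (hgt : τ m < q i) :
    numRejSU m τ (Function.update q i 0) = Kmax m τ q := by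
  have hNq : ∀ k, k ≤ m → Ncnt m τ (Function.update q i 0) k = Ncnt m τ q k + 1 := by
    intro k hk
    unfold Ncnt
    have hset : univ.filter (fun j => Function.update q i 0 j ≤ τ k)
        = insert i (univ.filter (fun j => q j ≤ τ k)) := by
      ext j
      simp only [mem_filter, mem_univ, true_and, mem_insert]
      rcases eq_or_ne j i with rfl | h
      · simp only [Function.update_self, true_or, iff_true]
        exact τ_nonneg hτ hτ0 hk
      · rw [Function.update_of_ne h]
        simp [h]
    rw [hset, card_insert_of_notMem]
    simp only [mem_filter, mem_univ, true_and, not_le]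
    exact lt_of_le_of_lt (hτ k m hk le_rfl) hgt
  unfold numRejSU Kmax
  congr 1
  ext k
  simp only [Set.mem_setOf_eq]
  constructor
  · rintro ⟨hk, hc⟩
    refine ⟨hk, ?_⟩
    have := hNq k hk
    simp only [Ncnt] at this ⊢
    omega
  · rintro ⟨hk, hc⟩
    refine ⟨hk, ?_⟩
    have := hNq k hk
    simp only [Ncnt] at this hc
    omega


variable (m τ)

lemma measurable_Ncnt (l : ℕ) : Measurable fun q : Fin m → ℝ => Ncnt m τ q l := by
  unfold Ncnt
  simp_rw [card_filter]
  exact Finset.measurable_sum _ fun j _ => Measurable.ite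
    (measurableSet_le (measurable_pi_apply j) measurable_const)
    measurable_const measurable_const

lemma measurable_numRej : Measurable (numRejSU m τ) := by
  have key : ∀ c : ℕ, MeasurableSet {q : Fin m → ℝ | c ≤ numRejSU m τ q} := by
    intro c
    have hset : {q : Fin m → ℝ | c ≤ numRejSU m τ q}
        = ⋃ l ∈ Finset.Icc c m, {q : Fin m → ℝ | l ≤ Ncnt m τ q l} := by
      ext q
      simp only [Set.mem_setOf_eq, Set.mem_iUnion, Finset.mem_Icc, exists_prop]
      constructor
      · intro h
        obtain ⟨h1, h2⟩ := numRej_mem (τ := τ) q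
        exact ⟨numRejSU m τ q, ⟨h, h1⟩, h2⟩
      · rintro ⟨l, ⟨hcl, hlm⟩, hl⟩
        exact hcl.trans (le_numRej hlm hl)
    rw [hset]
    exact MeasurableSet.biUnion (Finset.Icc c m).countable_toSet
      (fun l _ => measurable_Ncnt m τ l ((Set.to_countable _).measurableSet (s := Set.Ici l)))
  apply measurable_to_countable'
  intro y
  have : numRejSU m τ ⁻¹' {y}
      = {q : Fin m → ℝ | y ≤ numRejSU m τ q} \ {q | y + 1 ≤ numRejSU m τ q} := by
    ext q
    simp only [Set.mem_preimage, Set.mem_singleton_iff, Set.mem_diff, Set.mem_setOf_eq]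
    omega
  rw [this]
  exact (key y).diff (key (y + 1))

lemma measurable_Kmax : Measurable (Kmax m τ) := by
  have memK : ∀ q : Fin m → ℝ, Kmax m τ q ≤ m ∧ Kmax m τ q ≤ Ncnt m τ q (Kmax m τ q) + 1 := by
    intro q
    have h : Kmax m τ q ∈ {k | k ≤ m ∧ k ≤ Ncnt m τ q k + 1} := by
      apply Nat.sSup_mem ⟨0, by simp only [Set.mem_setOf_eq]; exact ⟨Nat.zero_le _, Nat.zero_le _⟩⟩
        ⟨m, fun k hk => hk.1⟩
    exact h
  have key : ∀ c : ℕ, MeasurableSet {q : Fin m → ℝ | c ≤ Kmax m τ q} := by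
    intro c
    have hset : {q : Fin m → ℝ | c ≤ Kmax m τ q}
        = ⋃ l ∈ Finset.Icc c m, {q : Fin m → ℝ | l ≤ Ncnt m τ q l + 1} := by
      ext q
      simp only [Set.mem_setOf_eq, Set.mem_iUnion, Finset.mem_Icc, exists_prop]
      constructor
      · intro h
        exact ⟨Kmax m τ q, ⟨h, (memK q).1⟩, (memK q).2⟩
      · rintro ⟨l, ⟨hcl, hlm⟩, hl⟩
        exact hcl.trans (le_csSup ⟨m, fun x hx => hx.1⟩ ⟨hlm, hl⟩)
    rw [hset]
    refine MeasurableSet.biUnion (Finset.Icc c m).countable_toSet (fun l _ => ?_)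
    have : {q : Fin m → ℝ | l ≤ Ncnt m τ q l + 1}
        = (fun q => Ncnt m τ q l) ⁻¹' {n | l ≤ n + 1} := rfl
    rw [this]
    exact measurable_Ncnt m τ l ((Set.to_countable _).measurableSet)
  apply measurable_to_countable'
  intro y
  have : Kmax m τ ⁻¹' {y}
      = {q : Fin m → ℝ | y ≤ Kmax m τ q} \ {q | y + 1 ≤ Kmax m τ q} := by
    ext q
    simp only [Set.mem_preimage, Set.mem_singleton_iff, Set.mem_diff, Set.mem_setOf_eq]
    omega
  rw [this]
  exact (key y).diff (key (y + 1))

end DBHaux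

/-- the [DBH-SU] procedure controls the FDR at level `α`. -/
theorem fdr_DBH_SU_le_alpha
    {Ω : Type*} [MeasurableSpace Ω] (P : Measure Ω) [IsProbabilityMeasure P]
    (m : ℕ) (hm : 1 ≤ m)
    (p : Fin m → Ω → ℝ) (hmeas : ∀ i, Measurable (p i))
    (hp01 : ∀ i ω, p i ω ∈ Set.Icc (0 : ℝ) 1)
    (hindep : iIndepFun p P)
    (H0 : Finset (Fin m))
    (F : Fin m → ℝ → ℝ)
    (hFmono : ∀ i, MonotoneOn (F i) (Set.Icc 0 1))
    (hFrange : ∀ i, ∀ t ∈ Set.Icc (0 : ℝ) 1, F i t ∈ Set.Icc (0 : ℝ) 1)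
    (hF0 : ∀ i, F i 0 = 0) (hF1 : ∀ i, F i 1 = 1)
    (hnull : ∀ i ∈ H0, ∀ t ∈ Set.Icc (0 : ℝ) 1,
      P {ω | p i ω ≤ t} ≤ ENNReal.ofReal (F i t))
    (A : Finset ℝ) (hA0 : (0 : ℝ) ∈ A) (hA : ∀ t ∈ A, t ∈ Set.Icc (0 : ℝ) 1)
    (hpA : ∀ i, ∀ᵐ ω ∂P, p i ω ∈ A)
    (α : ℝ) (hα : α ∈ Set.Ioo (0 : ℝ) 1)
    (τ : ℕ → ℝ) (hτ0 : τ 0 = 0)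
    (hτm : IsGreatest {t : ℝ | t ∈ A ∧ (∀ i, F i t < 1) ∧
      (1 / (m : ℝ)) * ∑ i : Fin m, F i t / (1 - F i t) ≤ α} (τ m))
    (hτk : ∀ k, 1 ≤ k → k < m → IsGreatest {t : ℝ | t ∈ A ∧ t ≤ τ m ∧
      (1 / (m : ℝ)) * ∑ i : Fin m, F i t / (1 - F i (τ m)) ≤ α * k / m} (τ k))
    :
    ∫ ω, FDP m H0 (rejSU m τ (fun j => p j ω)) ∂P ≤ α := by
  classical
  obtain ⟨hα0, hα1⟩ := hα
  have hm0 : (0 : ℝ) < m := by exact_mod_cast hm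
  -- basic facts about τ
  have hτA : ∀ k, 1 ≤ k → k ≤ m → τ k ∈ A := by
    intro k h1 h2
    rcases eq_or_lt_of_le h2 with h | h
    · rw [h]; exact hτm.1.1
    · exact (hτk k h1 h).1.1
  have hτ01 : ∀ k, 1 ≤ k → k ≤ m → τ k ∈ Set.Icc (0 : ℝ) 1 :=
    fun k h1 h2 => hA _ (hτA k h1 h2)
  have hτmono : ∀ k l, k ≤ l → l ≤ m → τ k ≤ τ l := by
    intro k l hkl hlm
    rcases Nat.eq_zero_or_pos k with rfl | hk1
    · rcases Nat.eq_zero_or_pos l with rfl | hl1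
      · exact le_refl _
      · rw [hτ0]; exact (hτ01 l hl1 hlm).1
    rcases eq_or_lt_of_le hkl with rfl | hkl'
    · exact le_refl _
    rcases eq_or_lt_of_le hlm with rfl | hlm'
    · exact (hτk k hk1 hkl').1.2.1
    · have hkm : k < m := hkl'.trans hlm'
      refine (hτk l (by omega) hlm').2 ?_
      refine ⟨(hτk k hk1 hkm).1.1, (hτk k hk1 hkm).1.2.1, ?_⟩
      refine le_trans (hτk k hk1 hkm).1.2.2 ?_
      have : (α * k : ℝ) ≤ α * l := by
        have : (k : ℝ) ≤ l := by exact_mod_cast hkl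
        nlinarith
      exact div_le_div_of_nonneg_right this hm0.le

  have hFm : ∀ i, F i (τ m) < 1 := hτm.1.2.1
  have hd : ∀ i, (0:ℝ) < 1 - F i (τ m) := fun i => by linarith [hFm i]
  have hF0' : ∀ i k, 1 ≤ k → k ≤ m → 0 ≤ F i (τ k) :=
    fun i k h1 h2 => (hFrange i _ (hτ01 k h1 h2)).1
  have hmulm : ∀ x y : ℝ, (1 / (m:ℝ)) * x ≤ y / m → x ≤ y := by
    intro x y hxy
    have h' := mul_le_mul_of_nonneg_left hxy hm0.le
    rw [← mul_assoc, mul_one_div_cancel hm0.ne', one_mul, mul_div_cancel₀ _ hm0.ne'] at h'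
    exact h'
  have hKsum : ∀ K, 1 ≤ K → K ≤ m → ∑ i, F i (τ K) / (1 - F i (τ m)) ≤ α * K := by
    intro K h1 h2
    rcases eq_or_lt_of_le h2 with h | h
    · have h22 := hτm.1.2.2
      rw [h]
      apply hmulm
      rw [mul_div_assoc, div_self hm0.ne', mul_one]
      exact h22
    · exact hmulm _ _ (hτk K h1 h).1.2.2
  -- notation
  set q : Ω → Fin m → ℝ := fun ω j => p j ω with hq_def
  have hqmeas : Measurable q := measurable_pi_lambda _ hmeas
  have hq0 : ∀ ω j, 0 ≤ q ω j := fun ω j => (hp01 j ω).1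
  set kI : Fin m → Ω → ℕ := fun i ω => numRejSU m τ (Function.update (q ω) i 0) with hkI_def
  set Kb : Ω → ℕ := fun ω => DBHaux.Kmax m τ (q ω) with hKb_def
  have hupdmeas : ∀ i : Fin m, Measurable (fun v : Fin m → ℝ => Function.update v i 0) := by
    intro i
    apply measurable_pi_lambda
    intro j
    rcases eq_or_ne j i with rfl | h
    · simp only [Function.update_self]; exact measurable_const
    · simp only [Function.update_of_ne h]; exact measurable_pi_apply j
  have hkImeas : ∀ i, Measurable (kI i) :=
    fun i => (DBHaux.measurable_numRej m τ).comp ((hupdmeas i).comp hqmeas)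
  have hkI1 : ∀ i ω, 1 ≤ kI i ω :=
    fun i ω => DBHaux.one_le_numRej_update hτmono hτ0 hm (q ω) i
  have hkIm : ∀ i ω, kI i ω ≤ m := fun i ω => (DBHaux.numRej_mem _).1
  have hKb1 : ∀ ω, 1 ≤ Kb ω := fun ω => (DBHaux.Kmax_mem hm (q ω)).1
  have hKbm : ∀ ω, Kb ω ≤ m := fun ω => (DBHaux.Kmax_mem hm (q ω)).2
  -- independence of p i and kI i
  have hIndep : ∀ i : Fin m, IndepFun (p i) (kI i) P := by
    intro i
    have h0 := hindep.indepFun_finset {i} {i}ᶜ disjoint_compl_right hmeas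
    set φ1 : ({x // x ∈ ({i} : Finset (Fin m))} → ℝ) → ℝ :=
      fun v => v ⟨i, mem_singleton_self i⟩ with hφ1
    set φ2 : ({x // x ∈ ({i}ᶜ : Finset (Fin m))} → ℝ) → ℕ :=
      fun v => numRejSU m τ (fun j => if h : j = i then 0 else
        v ⟨j, by simp only [Finset.mem_compl, Finset.mem_singleton]; exact h⟩) with hφ2
    have hφ1m : Measurable φ1 := measurable_pi_apply _
    have hφ2m : Measurable φ2 := by
      apply (DBHaux.measurable_numRej m τ).comp
      apply measurable_pi_lambda
      intro j
      rcases eq_or_ne j i with rfl | h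
      · simp only [dif_pos rfl]; exact measurable_const
      · simp only [dif_neg h]; exact measurable_pi_apply _
    have := h0.comp hφ1m hφ2m
    have he1 : (φ1 ∘ fun ω (j : {x // x ∈ ({i} : Finset (Fin m))}) => p j ω) = p i := rfl
    have he2 : (φ2 ∘ fun ω (j : {x // x ∈ ({i}ᶜ : Finset (Fin m))}) => p j ω) = kI i := by
      funext ω
      simp only [Function.comp_apply, hφ2, hkI_def]
      congr 1
      funext j
      rcases eq_or_ne j i with rfl | h
      · simp [Function.update_self]
      · simp [h, Function.update_of_ne h]
        rfl
    rw [he1, he2] at this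
    exact this
  -- the relevant measurable sets
  set Bs : Fin m → ℕ → Set Ω := fun i k => kI i ⁻¹' {k} with hBs_def
  have hBmeas : ∀ i k, MeasurableSet (Bs i k) :=
    fun i k => hkImeas i ((Set.to_countable _).measurableSet)
  set Ci : Fin m → ℕ → Set Ω := fun i k => Bs i k ∩ {ω | p i ω ≤ τ k} with hCi_def
  set Di : Fin m → ℕ → Set Ω := fun i k => Bs i k ∩ {ω | τ m < p i ω} with hDi_def
  have hLe : ∀ i k, MeasurableSet {ω | p i ω ≤ τ k} :=
    fun i k => measurableSet_le (hmeas i) measurable_const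
  have hGt : ∀ i, MeasurableSet {ω | τ m < p i ω} :=
    fun i => measurableSet_lt measurable_const (hmeas i)
  have hCmeas : ∀ i k, MeasurableSet (Ci i k) := fun i k => (hBmeas i k).inter (hLe i k)
  have hDmeas : ∀ i k, MeasurableSet (Di i k) := fun i k => (hBmeas i k).inter (hGt i)
  -- product formulas
  have hPC : ∀ i k, P (Ci i k) = P (Bs i k) * P {ω | p i ω ≤ τ k} := by
    intro i k
    have := (hIndep i).measure_inter_preimage_eq_mul (Set.Iic (τ k)) {k}
      measurableSet_Iic ((Set.to_countable _).measurableSet)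
    have heq : Ci i k = p i ⁻¹' Set.Iic (τ k) ∩ kI i ⁻¹' {k} := by
      rw [hCi_def]; simp only [hBs_def]; rw [Set.inter_comm]; rfl
    rw [heq, this, mul_comm]
    rfl
  have hPD : ∀ i k, P (Di i k) = P (Bs i k) * P {ω | τ m < p i ω} := by
    intro i k
    have := (hIndep i).measure_inter_preimage_eq_mul (Set.Ioi (τ m)) {k}
      measurableSet_Ioi ((Set.to_countable _).measurableSet)
    have heq : Di i k = p i ⁻¹' Set.Ioi (τ m) ∩ kI i ⁻¹' {k} := by
      rw [hDi_def]; simp only [hBs_def]; rw [Set.inter_comm]; rfl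
    rw [heq, this, mul_comm]
    rfl
  -- bounds on the marginals
  have hPle : ∀ i ∈ H0, ∀ k, 1 ≤ k → k ≤ m → (P {ω | p i ω ≤ τ k}).toReal ≤ F i (τ k) := by
    intro i hi k h1 h2
    exact ENNReal.toReal_le_of_le_ofReal (hF0' i k h1 h2) (hnull i hi _ (hτ01 k h1 h2))
  have hPgt : ∀ i ∈ H0, 1 - F i (τ m) ≤ (P {ω | τ m < p i ω}).toReal := by
    intro i hi
    have hc : {ω | τ m < p i ω} = {ω | p i ω ≤ τ m}ᶜ := by
      ext ω; simp [not_le]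
    rw [hc, prob_compl_eq_one_sub (hLe i m)]
    rw [ENNReal.toReal_sub_of_le prob_le_one ENNReal.one_ne_top]
    simp only [ENNReal.toReal_one]
    have := hPle i hi m hm le_rfl
    linarith

  -- pointwise identity: FDP = sum of indicators over leave-one-out indices
  have hstep1 : ∀ ω, FDP m H0 (rejSU m τ (fun j => p j ω))
      = ∑ i ∈ H0, ∑ k ∈ Finset.Icc 1 m,
          Set.indicator (Ci i k) (fun _ => ((k : ℝ))⁻¹) ω := by
    intro ω
    have hcardR : (rejSU m τ (q ω)).card = numRejSU m τ (q ω) :=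
      DBHaux.Ncnt_numRej hτmono (q ω)
    have hinter : rejSU m τ (q ω) ∩ H0
        = H0.filter (fun i => q ω i ≤ τ (numRejSU m τ (q ω))) := by
      ext i
      simp only [rejSU, mem_inter, mem_filter, mem_univ, true_and]
      exact and_comm
    have hfdp : FDP m H0 (rejSU m τ (q ω))
        = ∑ i ∈ H0, (if q ω i ≤ τ (numRejSU m τ (q ω))
            then ((max (numRejSU m τ (q ω)) 1 : ℕ) : ℝ)⁻¹ else 0) := by
      rw [FDP, hinter, hcardR, card_filter, Nat.cast_sum]
      have hmax : max ((numRejSU m τ (q ω) : ℕ) : ℝ) 1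
          = ((max (numRejSU m τ (q ω)) 1 : ℕ) : ℝ) := by
        rw [Nat.cast_max, Nat.cast_one]
      rw [hmax, Finset.sum_div]
      apply Finset.sum_congr rfl
      intro i _
      split_ifs with h
      · rw [Nat.cast_one, one_div]
      · rw [Nat.cast_zero, zero_div]
    have hmain : FDP m H0 (rejSU m τ (fun j => p j ω)) = FDP m H0 (rejSU m τ (q ω)) := rfl
    rw [hmain, hfdp]
    apply Finset.sum_congr rfl
    intro i _
    rw [DBHaux.su_identity hτmono hτ0 hm (q ω) i]
    rw [Finset.sum_eq_single_of_mem (kI i ω) (Finset.mem_Icc.mpr ⟨hkI1 i ω, hkIm i ω⟩)]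
    · rw [Set.indicator_apply]
      have hmem : ω ∈ Ci i (kI i ω) ↔ p i ω ≤ τ (kI i ω) := by
        simp only [hCi_def, hBs_def, Set.mem_inter_iff, Set.mem_preimage,
          Set.mem_singleton_iff, Set.mem_setOf_eq, true_and]
      rw [if_congr hmem rfl rfl]
    · intro b _ hb
      rw [Set.indicator_apply, if_neg]
      intro hc
      exact hb hc.1.symm
  have hint : ∀ (s : Set Ω), MeasurableSet s → ∀ c : ℝ,
      Integrable (Set.indicator s (fun _ => c)) P :=
    fun s hs c => (integrable_const c).indicator hs
  have hFDPint : ∫ ω, FDP m H0 (rejSU m τ (fun j => p j ω)) ∂P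
      = ∑ i ∈ H0, ∑ k ∈ Finset.Icc 1 m, (P (Ci i k)).toReal * ((k:ℝ))⁻¹ := by
    rw [integral_congr_ae (Filter.Eventually.of_forall hstep1)]
    rw [integral_finset_sum _ (fun i _ =>
      integrable_finset_sum _ (fun k _ => hint _ (hCmeas i k) _))]
    apply Finset.sum_congr rfl
    intro i _
    rw [integral_finset_sum _ (fun k _ => hint _ (hCmeas i k) _)]
    apply Finset.sum_congr rfl
    intro k _
    rw [integral_indicator_const _ (hCmeas i k), smul_eq_mul]
    rfl
  -- term by term bound
  have hterm : ∀ i ∈ H0, ∀ k ∈ Finset.Icc 1 m,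
      (P (Ci i k)).toReal * ((k:ℝ))⁻¹
        ≤ (P (Di i k)).toReal * (F i (τ k) / ((1 - F i (τ m)) * k)) := by
    intro i hi k hk
    obtain ⟨h1, h2⟩ := Finset.mem_Icc.mp hk
    have hk0 : (0:ℝ) < k := by exact_mod_cast h1
    rw [hPC, hPD, ENNReal.toReal_mul, ENNReal.toReal_mul]
    set b := (P (Bs i k)).toReal with hb_def
    set u := (P {ω | p i ω ≤ τ k}).toReal with hu_def
    set v := (P {ω | τ m < p i ω}).toReal with hv_def
    have hb0 : 0 ≤ b := ENNReal.toReal_nonneg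
    have hu : u ≤ F i (τ k) := hPle i hi k h1 h2
    have hu0 : 0 ≤ u := ENNReal.toReal_nonneg
    have hv : 1 - F i (τ m) ≤ v := hPgt i hi
    have hdi := hd i
    have hF := hF0' i k h1 h2
    have hq0' : (0:ℝ) ≤ F i (τ k) / ((1 - F i (τ m)) * k) :=
      div_nonneg hF (mul_nonneg hdi.le hk0.le)
    have e1 : b * u * (k:ℝ)⁻¹ ≤ b * F i (τ k) * (k:ℝ)⁻¹ := by
      apply mul_le_mul_of_nonneg_right (mul_le_mul_of_nonneg_left hu hb0)
      positivity
    have e2 : b * F i (τ k) * (k:ℝ)⁻¹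
        = b * (1 - F i (τ m)) * (F i (τ k) / ((1 - F i (τ m)) * k)) := by
      field_simp
    have e3 : b * (1 - F i (τ m)) * (F i (τ k) / ((1 - F i (τ m)) * k))
        ≤ b * v * (F i (τ k) / ((1 - F i (τ m)) * k)) :=
      mul_le_mul_of_nonneg_right (mul_le_mul_of_nonneg_left hv hb0) hq0'
    linarith
  have hsum2 : ∑ i ∈ H0, ∑ k ∈ Finset.Icc 1 m, (P (Ci i k)).toReal * ((k:ℝ))⁻¹
      ≤ ∑ i ∈ H0, ∑ k ∈ Finset.Icc 1 m,
          (P (Di i k)).toReal * (F i (τ k) / ((1 - F i (τ m)) * k)) :=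
    Finset.sum_le_sum fun i hi => Finset.sum_le_sum fun k hk => hterm i hi k hk
  -- rewrite the bound as an integral
  have hRHS : ∑ i ∈ H0, ∑ k ∈ Finset.Icc 1 m,
        (P (Di i k)).toReal * (F i (τ k) / ((1 - F i (τ m)) * k))
      = ∫ ω, (∑ i ∈ H0, ∑ k ∈ Finset.Icc 1 m,
          Set.indicator (Di i k) (fun _ => F i (τ k) / ((1 - F i (τ m)) * k)) ω) ∂P := by
    rw [integral_finset_sum _ (fun i _ =>
      integrable_finset_sum _ (fun k _ => hint _ (hDmeas i k) _))]
    apply Finset.sum_congr rfl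
    intro i _
    rw [integral_finset_sum _ (fun k _ => hint _ (hDmeas i k) _)]
    apply Finset.sum_congr rfl
    intro k _
    rw [integral_indicator_const _ (hDmeas i k), smul_eq_mul]
    rfl
  -- pointwise bound by α
  have hptwise : ∀ ω, (∑ i ∈ H0, ∑ k ∈ Finset.Icc 1 m,
      Set.indicator (Di i k) (fun _ => F i (τ k) / ((1 - F i (τ m)) * k)) ω) ≤ α := by
    intro ω
    have hKpos : (0:ℝ) < Kb ω := by exact_mod_cast hKb1 ω
    have hci : ∀ i : Fin m, (0:ℝ) ≤ F i (τ (Kb ω)) / ((1 - F i (τ m)) * (Kb ω)) :=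
      fun i => div_nonneg (hF0' i _ (hKb1 ω) (hKbm ω)) (mul_nonneg (hd i).le hKpos.le)
    have hinner : ∀ i : Fin m, ∑ k ∈ Finset.Icc 1 m,
        Set.indicator (Di i k) (fun _ => F i (τ k) / ((1 - F i (τ m)) * k)) ω
          ≤ F i (τ (Kb ω)) / ((1 - F i (τ m)) * (Kb ω)) := by
      intro i
      by_cases hgt : τ m < p i ω
      · have hKI : kI i ω = Kb ω := DBHaux.numRej_update_of_gt hτmono hτ0 (q ω) i hgt
        rw [Finset.sum_eq_single_of_mem (kI i ω) (Finset.mem_Icc.mpr ⟨hkI1 i ω, hkIm i ω⟩)]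
        · rw [Set.indicator_apply, if_pos ⟨rfl, hgt⟩, hKI]
        · intro b _ hb
          rw [Set.indicator_apply, if_neg]
          intro hc
          exact hb hc.1.symm
      · rw [Finset.sum_eq_zero]
        · exact hci i
        · intro k _
          rw [Set.indicator_apply, if_neg]
          intro hc
          exact hgt hc.2
    calc ∑ i ∈ H0, ∑ k ∈ Finset.Icc 1 m,
          Set.indicator (Di i k) (fun _ => F i (τ k) / ((1 - F i (τ m)) * k)) ω
        ≤ ∑ i ∈ H0, F i (τ (Kb ω)) / ((1 - F i (τ m)) * (Kb ω)) :=
          Finset.sum_le_sum fun i _ => hinner i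
      _ ≤ ∑ i : Fin m, F i (τ (Kb ω)) / ((1 - F i (τ m)) * (Kb ω)) :=
          Finset.sum_le_sum_of_subset_of_nonneg (subset_univ H0) (fun i _ _ => hci i)
      _ = (∑ i : Fin m, F i (τ (Kb ω)) / (1 - F i (τ m))) / (Kb ω) := by
          rw [Finset.sum_div]
          apply Finset.sum_congr rfl
          intro i _
          rw [div_div]
      _ ≤ α := by
          rw [div_le_iff₀ hKpos]
          exact hKsum (Kb ω) (hKb1 ω) (hKbm ω)
  -- conclude
  rw [hFDPint]
  refine le_trans (le_trans hsum2 (le_of_eq hRHS)) ?_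
  have hintsum : Integrable (fun ω => ∑ i ∈ H0, ∑ k ∈ Finset.Icc 1 m,
      Set.indicator (Di i k) (fun _ => F i (τ k) / ((1 - F i (τ m)) * k)) ω) P :=
    integrable_finset_sum _ (fun i _ =>
      integrable_finset_sum _ (fun k _ => hint _ (hDmeas i k) _))
  calc ∫ ω, (∑ i ∈ H0, ∑ k ∈ Finset.Icc 1 m,
        Set.indicator (Di i k) (fun _ => F i (τ k) / ((1 - F i (τ m)) * k)) ω) ∂P
      ≤ ∫ _, α ∂P := integral_mono hintsum (integrable_const α) hptwise
    _ = α := by simp
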